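/- Assume that D²_{pp}H(x,p) ≥ (1/C₀)I for all (x,p) and that χ ≥ 0. For (x,t,p,s) ∈ Q̄_T × ℝ^{d+1} set H̃(x,t,p,s) = H(x,p) (so D²_{qq}H̃ = diag(D²_{pp}H(x,p), 0)), and let Ĩ = diag(1,…,1,0) ∈ ℝ^{(d+1)×(d+1)}. Then for every u ∈ C²(Q_T) and every (x,t) ∈ Q_T, writing A = A(x,Du(x,t)) and χ = χ(x,−u_t + H(x,D_xu)), one has tr(D²_{qq}H̃(x,t,Du)·D²u·A·D²u) ≥ (3/(4C₀))|−D_xu_t + D_pH(x,D_xu)·D²_{xx}u|² + (1/(4C₀))·tr(Ĩ·D²u·A·D²u) + (3χ/(4C₀²))|D²_{xx}u|². -/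

import Mathlib

open Real Set

noncomputable section

abbrev Vec (d : ℕ) := Fin d → ℝ

def enorm {d : ℕ} (v : Vec d) : ℝ := Real.sqrt (∑ i, v i ^ 2)

def ev {d : ℕ} (i : Fin d) : Vec d := Pi.single i 1

def dt {d : ℕ} (φ : Vec d × ℝ → ℝ) (z : Vec d × ℝ) : ℝ := fderiv ℝ φ z (0, 1)

def dx {d : ℕ} (φ : Vec d × ℝ → ℝ) (z : Vec d × ℝ) (i : Fin d) : ℝ := fderiv ℝ φ z (ev i, 0)

def Dx {d : ℕ} (φ : Vec d × ℝ → ℝ) (z : Vec d × ℝ) : Vec d := fun i => dx φ z i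

def DpH {d : ℕ} (H : Vec d → Vec d → ℝ) (x p : Vec d) : Vec d := fun i => fderiv ℝ (H x) p (ev i)

def Hpp {d : ℕ} (H : Vec d → Vec d → ℝ) (x p v w : Vec d) : ℝ :=
  fderiv ℝ (fun q => fderiv ℝ (H x) q w) p v

def QT (d : ℕ) (T : ℝ) : Set (Vec d × ℝ) := {z | z.2 ∈ Set.Ioo 0 T}

/-- basis of space-time ℝ^d × ℝ ≅ ℝ^{d+1} -/
def eq1 {d : ℕ} (i : Fin (d + 1)) : Vec d × ℝ :=
  if h : (i : ℕ) < d then (ev ⟨i, h⟩, 0) else (0, 1)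

/-- extension of a d×d matrix by a zero row and column -/
def extMat {d : ℕ} (M : Fin d → Fin d → ℝ) : Matrix (Fin (d + 1)) (Fin (d + 1)) ℝ :=
  Matrix.of fun i j =>
    if hi : (i : ℕ) < d then if hj : (j : ℕ) < d then M ⟨i, hi⟩ ⟨j, hj⟩ else 0 else 0

/-- the vector (D_pH, -1) ∈ ℝ^{d+1} -/
def snocVec {d : ℕ} (v : Vec d) (a : ℝ) : Fin (d + 1) → ℝ := Fin.snoc v a

/-- the coefficient matrix A(x,p,s) = (D_pH,-1)⊗(D_pH,-1) + χ·diag(D²_{pp}H, 0) -/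
def Amat {d : ℕ} (H : Vec d → Vec d → ℝ) (χ : Vec d → ℝ → ℝ) (x : Vec d) (q : Vec d × ℝ) :
    Matrix (Fin (d + 1)) (Fin (d + 1)) ℝ :=
  Matrix.of fun i j =>
    snocVec (DpH H x q.1) (-1) i * snocVec (DpH H x q.1) (-1) j
      + χ x (-q.2 + H x q.1) * extMat (fun a b => Hpp H x q.1 (ev a) (ev b)) i j

/-- the full (d+1)×(d+1) space-time Hessian of u -/
def HessFull {d : ℕ} (u : Vec d × ℝ → ℝ) (z : Vec d × ℝ) :
    Matrix (Fin (d + 1)) (Fin (d + 1)) ℝ :=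
  Matrix.of fun i j => fderiv ℝ (fun z' => fderiv ℝ u z' (eq1 j)) z (eq1 i)

/-- full space-time gradient Du = (D_xu, u_t) as an element of ℝ^d × ℝ -/
def Duq {d : ℕ} (u : Vec d × ℝ → ℝ) (z : Vec d × ℝ) : Vec d × ℝ := (Dx u z, dt u z)

/-- spatial Hessian entries -/
def Hxx {d : ℕ} (u : Vec d × ℝ → ℝ) (z : Vec d × ℝ) (i j : Fin d) : ℝ :=
  fderiv ℝ (fun z' => dx u z' j) z (ev i, 0)

/-- mixed derivative D_x u_t -/
def Dxut {d : ℕ} (u : Vec d × ℝ → ℝ) (z : Vec d × ℝ) (i : Fin d) : ℝ :=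
  fderiv ℝ (fun z' => dt u z') z (ev i, 0)

/-- the matrix Ĩ = diag(1,…,1,0) -/
def Itilde (d : ℕ) : Matrix (Fin (d + 1)) (Fin (d + 1)) ℝ :=
  extMat fun a b => if a = b then (1 : ℝ) else 0


section AuxLemmas
open Matrix


/-- second derivative entry via fderiv of directional derivative -/
lemma sndDeriv_entry {E : Type*} [NormedAddCommGroup E] [NormedSpace ℝ E]
    (f : E → ℝ) (x : E) (h : DifferentiableAt ℝ (fderiv ℝ f) x) (v w : E) :
    fderiv ℝ (fun y => fderiv ℝ f y w) x v = fderiv ℝ (fderiv ℝ f) x v w := by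
  have h2 : (fun y => fderiv ℝ f y w) = fun y => (fderiv ℝ f y) ((fun _ : E => w) y) := rfl
  rw [h2, fderiv_clm_apply h (differentiableAt_const w)]
  simp

lemma vec_eq_sum {d : ℕ} (y : Fin d → ℝ) : y = ∑ a, y a • (Pi.single a 1 : Fin d → ℝ) := by
  funext i
  simp [Finset.sum_apply, Pi.single_apply]

lemma bilin_expand {d : ℕ} (b : (Fin d → ℝ) →L[ℝ] ((Fin d → ℝ) →L[ℝ] ℝ)) (y w : Fin d → ℝ) :
    b y w = ∑ a, ∑ e, y a * (b (Pi.single a 1) (Pi.single e 1) * w e) := by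
  conv_lhs => rw [vec_eq_sum y, vec_eq_sum w]
  simp [ContinuousLinearMap.sum_apply, Finset.mul_sum, mul_assoc, mul_left_comm]
  rw [Finset.sum_comm]
  exact Finset.sum_congr rfl fun a _ => Finset.sum_congr rfl fun e _ => by ring


lemma trace_SXST {n m : Type*} [Fintype n] [Fintype m] (S : Matrix m n ℝ) (X : Matrix n n ℝ) :
    (S * X * Sᵀ).trace = ∑ r, (S r) ⬝ᵥ X.mulVec (S r) := by
  simp only [Matrix.trace, Matrix.diag, Matrix.mul_apply, Matrix.transpose_apply,
    dotProduct, Matrix.mulVec, Finset.sum_mul, Finset.mul_sum]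
  refine Finset.sum_congr rfl fun r _ => ?_
  rw [Finset.sum_comm]
  exact Finset.sum_congr rfl fun i _ => Finset.sum_congr rfl fun j _ => by ring

lemma trace_form {n m : Type*} [Fintype n] [Fintype m] (X M : Matrix n n ℝ) (R : Matrix m n ℝ)
    (hM : Mᵀ = M) :
    (X * M * (Rᵀ * R) * M).trace = ∑ r, ((R * M) r) ⬝ᵥ X.mulVec ((R * M) r) := by
  have h1 : X * M * (Rᵀ * R) * M = (X * (M * Rᵀ)) * (R * M) := by
    simp only [Matrix.mul_assoc]
  rw [h1, Matrix.trace_mul_comm]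
  have h2 : (R * M) * (X * (M * Rᵀ)) = (R * M) * X * (R * M)ᵀ := by
    rw [Matrix.transpose_mul, hM]
    simp only [Matrix.mul_assoc]
  rw [h2, trace_SXST]

lemma key {n : Type} [Fintype n] [DecidableEq n] {C₀ : ℝ} (hC₀ : 0 < C₀)
    (M B J : Matrix n n ℝ) (v : n → ℝ) (c : ℝ) (hc : 0 ≤ c)
    (hM : Mᵀ = M) (hB : Bᵀ = B) (hJ : Jᵀ = J) (hJJ : J * J = J)
    (hBJ : ∀ y : n → ℝ, (1 / C₀) * (y ⬝ᵥ J.mulVec y) ≤ y ⬝ᵥ B.mulVec y)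
    (hJpos : ∀ y : n → ℝ, 0 ≤ y ⬝ᵥ J.mulVec y) :
    3 / (4 * C₀) * ((M.mulVec v) ⬝ᵥ J.mulVec (M.mulVec v))
      + 1 / (4 * C₀) * (J * M * (Matrix.of (fun i j => v i * v j) + c • B) * M).trace
      + 3 * c / (4 * C₀ ^ 2) * (J * M * J * M).trace
    ≤ (B * M * (Matrix.of (fun i j => v i * v j) + c • B) * M).trace := by
  set A := Matrix.of (fun i j => v i * v j) + c • B with hA
  have hermB : B.IsHermitian := by
    rw [Matrix.IsHermitian, Matrix.conjTranspose_eq_transpose_of_trivial, hB]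
  have hBpsd : B.PosSemidef := .of_dotProduct_mulVec_nonneg hermB fun y => by
    simpa using le_trans (mul_nonneg (by positivity) (hJpos y)) (hBJ y)
  have h1 : (Matrix.of fun i j => v i * v j : Matrix n n ℝ).PosSemidef := by
    refine .of_dotProduct_mulVec_nonneg ?_ fun y => ?_
    · rw [Matrix.IsHermitian]
      ext i j
      simp [Matrix.conjTranspose_apply, mul_comm]
    · have : star y ⬝ᵥ (Matrix.of fun i j => v i * v j : Matrix n n ℝ).mulVec y
          = (∑ i, v i * y i) ^ 2 := by
        simp only [star_trivial, dotProduct, Matrix.mulVec, Matrix.of_apply, sq,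
          Finset.mul_sum, Finset.sum_mul]
        exact Finset.sum_congr rfl fun i _ => Finset.sum_congr rfl fun j _ => by ring
      rw [this]; positivity
  have h2 : (c • B).PosSemidef := by
    refine .of_dotProduct_mulVec_nonneg ?_ fun y => ?_
    · rw [Matrix.IsHermitian, Matrix.conjTranspose_smul,
        Matrix.conjTranspose_eq_transpose_of_trivial, hB]
      simp
    · rw [Matrix.smul_mulVec, dotProduct_smul, smul_eq_mul]
      exact mul_nonneg hc (hBpsd.dotProduct_mulVec_nonneg y)
  have hApsd : A.PosSemidef := h1.add h2
  obtain ⟨R, hR⟩ : ∃ R : Matrix n n ℝ, A = Rᴴ * R := by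
    open scoped MatrixOrder in
    have hA0 : 0 ≤ A := hApsd.nonneg
    exact ⟨CFC.sqrt A, by rw [← Matrix.star_eq_conjTranspose,
      (CFC.sqrt_nonneg A).isSelfAdjoint.star_eq, CFC.sqrt_mul_sqrt_self A hA0]⟩
  rw [Matrix.conjTranspose_eq_transpose_of_trivial] at hR
  have core : ∀ {m : Type} [Fintype m] (R : Matrix m n ℝ),
      (1 / C₀) * (J * M * (Rᵀ * R) * M).trace ≤ (B * M * (Rᵀ * R) * M).trace := by
    intro m _ R
    rw [trace_form J M R hM, trace_form B M R hM, Finset.mul_sum]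
    exact Finset.sum_le_sum fun r _ => hBJ _
  have est1 : (1 / C₀) * (J * M * A * M).trace ≤ (B * M * A * M).trace := by
    have := core R; rw [← hR] at this; exact this
  have hJdec : J = Jᵀ * J := by rw [hJ, hJJ]
  have est2 : (1 / C₀) * (J * M * J * M).trace ≤ (B * M * J * M).trace := by
    have := core J; rw [← hJdec] at this; exact this
  have hswap : (B * M * J * M).trace = (J * M * B * M).trace := by
    have e1 : B * M * J * M = (B * M) * (J * M) := by simp only [Matrix.mul_assoc]
    have e2 : (J * M) * (B * M) = J * M * B * M := by simp only [Matrix.mul_assoc]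
    rw [e1, Matrix.trace_mul_comm, e2]
  have hdec : (J * M * A * M).trace
      = (J * M * (Matrix.of fun i j => v i * v j) * M).trace + c * (J * M * B * M).trace := by
    rw [hA]
    simp only [Matrix.mul_add, Matrix.add_mul, Matrix.mul_smul, Matrix.smul_mul,
      Matrix.trace_add, Matrix.trace_smul, smul_eq_mul]
  have hS1 : (J * M * (Matrix.of fun i j => v i * v j) * M).trace
      = (M.mulVec v) ⬝ᵥ J.mulVec (M.mulVec v) := by
    have hM' : ∀ a b, M a b = M b a := fun a b => congrFun (congrFun hM b) a
    have hvv : (Matrix.of fun i j => v i * v j : Matrix n n ℝ)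
        = (Matrix.of fun (_ : Fin 1) j => v j)ᵀ * (Matrix.of fun (_ : Fin 1) j => v j) := by
      ext i j; simp [Matrix.mul_apply]
    have hrow : ((Matrix.of fun (_ : Fin 1) j => v j) * M) 0 = M.mulVec v := by
      funext j
      simp only [Matrix.mul_apply, Matrix.mulVec, dotProduct, Matrix.of_apply]
      exact Finset.sum_congr rfl fun k _ => by rw [mul_comm, hM' k j]
    rw [hvv, trace_form J M _ hM, Fin.sum_univ_one, hrow]
  rw [hdec, hS1] at est1 ⊢
  have est2' : 1 / C₀ * (J * M * J * M).trace ≤ (J * M * B * M).trace := hswap ▸ est2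
  have hfac : (0:ℝ) ≤ 3 * c / (4 * C₀) := by positivity
  have step : 3 / (4 * C₀) * (M.mulVec v ⬝ᵥ J.mulVec (M.mulVec v))
        + 1 / (4 * C₀) * (M.mulVec v ⬝ᵥ J.mulVec (M.mulVec v) + c * (J * M * B * M).trace)
        + 3 * c / (4 * C₀ ^ 2) * (J * M * J * M).trace
      = 1 / C₀ * (M.mulVec v ⬝ᵥ J.mulVec (M.mulVec v) + c * (J * M * B * M).trace)
        + 3 * c / (4 * C₀) * (1 / C₀ * (J * M * J * M).trace - (J * M * B * M).trace) := by
    have hne : C₀ ≠ 0 := ne_of_gt hC₀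
    field_simp
    ring
  rw [step]
  have hP : 3 * c / (4 * C₀) * (1 / C₀ * (J * M * J * M).trace - (J * M * B * M).trace) ≤ 0 :=
    mul_nonpos_of_nonneg_of_nonpos hfac (by linarith)
  linarith [est1, hP]



lemma eq1_castSucc {d : ℕ} (i : Fin d) : eq1 (Fin.castSucc i) = ((ev i : Vec d), (0:ℝ)) := by
  simp [eq1, i.isLt, Fin.eta]

lemma eq1_last {d : ℕ} : eq1 (Fin.last d) = ((0 : Vec d), (1:ℝ)) := by
  simp [eq1]

lemma extMat_castSucc {d : ℕ} (M : Fin d → Fin d → ℝ) (a b : Fin d) :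
    extMat M (Fin.castSucc a) (Fin.castSucc b) = M a b := by
  simp [extMat, a.isLt, b.isLt, Fin.eta]

lemma extMat_last_left {d : ℕ} (M : Fin d → Fin d → ℝ) (j : Fin (d+1)) :
    extMat M (Fin.last d) j = 0 := by
  simp [extMat]

lemma extMat_last_right {d : ℕ} (M : Fin d → Fin d → ℝ) (i : Fin (d+1)) :
    extMat M i (Fin.last d) = 0 := by
  unfold extMat
  simp only [Matrix.of_apply]
  split_ifs with h1 h2
  · exact absurd (by simpa using h2) (lt_irrefl d)
  · rfl
  · rfl

lemma extMat_symm {d : ℕ} (M : Fin d → Fin d → ℝ) (h : ∀ a b, M a b = M b a) :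
    (extMat M)ᵀ = extMat M := by
  ext i j
  rw [Matrix.transpose_apply]
  unfold extMat
  simp only [Matrix.of_apply]
  split_ifs <;> first | exact h _ _ | rfl

lemma extMat_form {d : ℕ} (M : Fin d → Fin d → ℝ) (y : Fin (d+1) → ℝ) :
    y ⬝ᵥ (extMat M).mulVec y
      = ∑ a, ∑ b, y (Fin.castSucc a) * (M a b * y (Fin.castSucc b)) := by
  simp only [dotProduct, Matrix.mulVec, Fin.sum_univ_castSucc, extMat_last_left,
    extMat_last_right, extMat_castSucc, zero_mul, add_zero, Finset.sum_const_zero, mul_zero,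
    Finset.mul_sum]

lemma Itilde_cc {d : ℕ} (a b : Fin d) :
    Itilde d (Fin.castSucc a) (Fin.castSucc b) = if a = b then 1 else 0 :=
  extMat_castSucc _ a b

lemma Itilde_ll {d : ℕ} (j : Fin (d+1)) : Itilde d (Fin.last d) j = 0 :=
  extMat_last_left _ j

lemma Itilde_lr {d : ℕ} (i : Fin (d+1)) : Itilde d i (Fin.last d) = 0 :=
  extMat_last_right _ i

lemma Itilde_sym {d : ℕ} : (Itilde d)ᵀ = Itilde d :=
  extMat_symm _ fun a b => by simp [eq_comm]

lemma Itilde_sq {d : ℕ} : Itilde d * Itilde d = Itilde d := by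
  ext i j
  rw [Matrix.mul_apply]
  induction i using Fin.lastCases with
  | last => simp [Itilde_ll]
  | cast a =>
    induction j using Fin.lastCases with
    | last => simp [Itilde_lr]
    | cast b =>
      rw [Fin.sum_univ_castSucc]
      simp [Itilde_cc, Itilde_ll, Itilde_lr, ite_mul, Finset.sum_ite_eq]

lemma Itilde_form {d : ℕ} (y : Fin (d+1) → ℝ) :
    y ⬝ᵥ (Itilde d).mulVec y = ∑ a, y (Fin.castSucc a) ^ 2 := by
  rw [Itilde, extMat_form]
  simp [ite_mul, mul_ite, Finset.sum_ite_eq, sq]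

end AuxLemmas

/-- Lemma 3.7: the key trace inequality. -/
theorem stmt4 (d : ℕ) (T C₀ : ℝ) (hd : 0 < d) (hT : 0 < T) (hC₀ : 0 < C₀)
    (H : Vec d → Vec d → ℝ) (χ : Vec d → ℝ → ℝ)
    (hH : ∀ x, ContDiff ℝ 2 (H x))
    (hHpp : ∀ x p v, (1 / C₀) * ∑ i, v i ^ 2 ≤ Hpp H x p v v)
    (hχ : ∀ x w, 0 ≤ χ x w)
    (u : Vec d × ℝ → ℝ) (hu : ContDiffOn ℝ 2 u (QT d T)) :
    ∀ z ∈ QT d T,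
      (3 / (4 * C₀)) *
          (∑ i, (-(Dxut u z i) + ∑ j, DpH H z.1 (Dx u z) j * Hxx u z j i) ^ 2)
        + (1 / (4 * C₀)) *
            Matrix.trace (Itilde d * HessFull u z * Amat H χ z.1 (Duq u z) * HessFull u z)
        + (3 * χ z.1 (-(dt u z) + H z.1 (Dx u z)) / (4 * C₀ ^ 2)) *
            (∑ i, ∑ j, Hxx u z i j ^ 2)
      ≤ Matrix.trace
          (extMat (fun a b => Hpp H z.1 (Dx u z) (ev a) (ev b)) * HessFull u z
            * Amat H χ z.1 (Duq u z) * HessFull u z) := by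
  intro z hz
  -- openness and regularity of u at z
  have hopen : IsOpen (QT d T) := isOpen_Ioo.preimage continuous_snd
  have hz' : QT d T ∈ nhds z := hopen.mem_nhds hz
  have hu2 : ContDiffAt ℝ 2 u z := hu.contDiffAt hz'
  have hdu : DifferentiableAt ℝ (fderiv ℝ u) z :=
    (hu2.fderiv_right (m := 1) (by norm_num)).differentiableAt one_ne_zero
  have hsymu : ∀ a b, fderiv ℝ (fderiv ℝ u) z a b = fderiv ℝ (fderiv ℝ u) z b a :=
    hu2.isSymmSndFDerivAt (by norm_num)
  -- Hessian entries
  have hMentry : ∀ i j, HessFull u z i j = fderiv ℝ (fderiv ℝ u) z (eq1 i) (eq1 j) :=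
    fun i j => sndDeriv_entry u z hdu (eq1 i) (eq1 j)
  have hMsym : Matrix.transpose (HessFull u z) = HessFull u z := by
    ext i j
    rw [Matrix.transpose_apply, hMentry, hMentry]
    exact hsymu _ _
  have hM' : ∀ i j, HessFull u z i j = HessFull u z j i :=
    fun i j => congrFun (congrFun hMsym j) i
  have hHxx : ∀ i j, Hxx u z i j = HessFull u z (Fin.castSucc i) (Fin.castSucc j) := by
    intro i j
    rw [Hxx, HessFull]
    simp only [Matrix.of_apply, eq1_castSucc]
    rfl
  have hDxut : ∀ i, Dxut u z i = HessFull u z (Fin.castSucc i) (Fin.last d) := by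
    intro i
    rw [Dxut, HessFull]
    simp only [Matrix.of_apply, eq1_castSucc, eq1_last]
    rfl
  -- regularity of H
  have hH2 : ContDiff ℝ 2 (H z.1) := hH z.1
  have hdH : ∀ y, DifferentiableAt ℝ (H z.1) y :=
    fun y => (hH2.differentiable two_ne_zero).differentiableAt
  have hdHp : DifferentiableAt ℝ (fderiv ℝ (H z.1)) (Dx u z) :=
    ((hH2.fderiv_right (m := 1) (by norm_num)).differentiable one_ne_zero).differentiableAt
  have hHppEq : ∀ v w, Hpp H z.1 (Dx u z) v w
      = fderiv ℝ (fderiv ℝ (H z.1)) (Dx u z) v w :=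
    fun v w => sndDeriv_entry (H z.1) (Dx u z) hdHp v w
  have hsymH : ∀ v w, fderiv ℝ (fderiv ℝ (H z.1)) (Dx u z) v w
      = fderiv ℝ (fderiv ℝ (H z.1)) (Dx u z) w v :=
    second_derivative_symmetric (fun y => (hdH y).hasFDerivAt) hdHp.hasFDerivAt
  -- the matrix B
  have hBsym : Matrix.transpose (extMat fun a b => Hpp H z.1 (Dx u z) (ev a) (ev b))
      = extMat fun a b => Hpp H z.1 (Dx u z) (ev a) (ev b) :=
    extMat_symm _ fun a b => by rw [hHppEq, hHppEq]; exact hsymH _ _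
  have hBform : ∀ y : Fin (d+1) → ℝ,
      dotProduct y ((extMat fun a b => Hpp H z.1 (Dx u z) (ev a) (ev b)).mulVec y)
        = fderiv ℝ (fderiv ℝ (H z.1)) (Dx u z) (fun a => y (Fin.castSucc a))
            (fun a => y (Fin.castSucc a)) := by
    intro y
    rw [extMat_form, bilin_expand (fderiv ℝ (fderiv ℝ (H z.1)) (Dx u z))]
    refine Finset.sum_congr rfl fun a _ => Finset.sum_congr rfl fun b _ => ?_
    simp only [hHppEq]
    rfl
  have hBJ : ∀ y : Fin (d+1) → ℝ,
      (1 / C₀) * dotProduct y ((Itilde d).mulVec y)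
        ≤ dotProduct y ((extMat fun a b => Hpp H z.1 (Dx u z) (ev a) (ev b)).mulVec y) := by
    intro y
    rw [Itilde_form, hBform]
    have h := hHpp z.1 (Dx u z) (fun a => y (Fin.castSucc a))
    rw [hHppEq] at h
    simpa using h
  have hJpos : ∀ y : Fin (d+1) → ℝ, 0 ≤ dotProduct y ((Itilde d).mulVec y) := by
    intro y
    rw [Itilde_form]
    positivity
  -- identification of Amat
  have hAeq : Amat H χ z.1 (Duq u z)
      = Matrix.of (fun i j => snocVec (DpH H z.1 (Dx u z)) (-1) i
          * snocVec (DpH H z.1 (Dx u z)) (-1) j)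
        + (χ z.1 (-(dt u z) + H z.1 (Dx u z)))
            • (extMat fun a b => Hpp H z.1 (Dx u z) (ev a) (ev b)) := by
    ext i j
    simp [Amat, Duq, Matrix.add_apply, Matrix.smul_apply, smul_eq_mul]
  -- the first sum
  have hS1eq : (∑ i, (-(Dxut u z i) + ∑ j, DpH H z.1 (Dx u z) j * Hxx u z j i) ^ 2)
      = dotProduct ((HessFull u z).mulVec (snocVec (DpH H z.1 (Dx u z)) (-1)))
          ((Itilde d).mulVec ((HessFull u z).mulVec (snocVec (DpH H z.1 (Dx u z)) (-1)))) := by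
    rw [Itilde_form]
    refine Finset.sum_congr rfl fun i _ => ?_
    congr 1
    have hmv : (HessFull u z).mulVec (snocVec (DpH H z.1 (Dx u z)) (-1)) (Fin.castSucc i)
        = (∑ j, HessFull u z (Fin.castSucc i) (Fin.castSucc j) * DpH H z.1 (Dx u z) j)
          + HessFull u z (Fin.castSucc i) (Fin.last d) * (-1) := by
      rw [Matrix.mulVec, dotProduct, Fin.sum_univ_castSucc]
      simp [snocVec, Fin.snoc_castSucc, Fin.snoc_last]
    rw [hmv, ← hDxut]
    have e1 : ∑ j, DpH H z.1 (Dx u z) j * Hxx u z j i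
        = ∑ j, HessFull u z (Fin.castSucc i) (Fin.castSucc j) * DpH H z.1 (Dx u z) j := by
      refine Finset.sum_congr rfl fun j _ => ?_
      rw [hHxx, hM' (Fin.castSucc j)]
      ring
    rw [e1]
    ring
  -- the second sum
  have hrowJM : ∀ (b : Fin d) (k : Fin (d+1)),
      (Itilde d * HessFull u z) (Fin.castSucc b) k = HessFull u z (Fin.castSucc b) k := by
    intro b k
    rw [Matrix.mul_apply, Fin.sum_univ_castSucc]
    simp [Itilde_cc, Itilde_ll, Itilde_lr, ite_mul, Finset.sum_ite_eq]
  have hrowJM' : ∀ k, (Itilde d * HessFull u z) (Fin.last d) k = 0 := by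
    intro k
    rw [Matrix.mul_apply]
    simp [Itilde_ll]
  have hS2eq : (∑ i, ∑ j, Hxx u z i j ^ 2)
      = (Itilde d * HessFull u z * Itilde d * HessFull u z).trace := by
    have h0 : Itilde d * HessFull u z * Itilde d * HessFull u z
        = Itilde d * HessFull u z * (Matrix.transpose (Itilde d) * Itilde d) * HessFull u z := by
      rw [Itilde_sym, Itilde_sq]
    rw [h0, trace_form _ _ _ hMsym, Fin.sum_univ_castSucc]
    have hlast : dotProduct ((Itilde d * HessFull u z) (Fin.last d))
        ((Itilde d).mulVec ((Itilde d * HessFull u z) (Fin.last d))) = 0 := by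
      simp only [dotProduct]
      refine Finset.sum_eq_zero fun k _ => ?_
      rw [hrowJM' k]
      ring
    rw [hlast, add_zero]
    refine Finset.sum_congr rfl fun b _ => ?_
    rw [Itilde_form]
    refine Finset.sum_congr rfl fun a _ => ?_
    rw [hrowJM b, hHxx]
  -- conclude via the abstract lemma
  rw [hAeq, hS1eq, hS2eq]
  exact key hC₀ (HessFull u z) (extMat fun a b => Hpp H z.1 (Dx u z) (ev a) (ev b)) (Itilde d)
    (snocVec (DpH H z.1 (Dx u z)) (-1)) (χ z.1 (-(dt u z) + H z.1 (Dx u z)))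
    (hχ _ _) hMsym hBsym Itilde_sym Itilde_sq hBJ hJpos
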